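/- For the exponential trawl function d(s) := b + (1−b)·exp(λs) with λ > 0 and b ∈ [0,1], the associated squashed trawl A satisfies leb(A) = (1 − b)/λ and, for every t ≥ 0, leb(A_t ∩ A) = ((1 − b)/λ)·e^{−λt}. -/

import Mathlib

open MeasureTheory Set Filter

private lemma hasDerivAt_exp_mul (lam x : ℝ) (hlam : lam ≠ 0) :
    HasDerivAt (fun y => Real.exp (lam * y) / lam) (Real.exp (lam * x)) x := by
  have h0 : HasDerivAt (fun y : ℝ => lam * y) lam x := by
    simpa using (hasDerivAt_id x).const_mul lam
  have h : HasDerivAt (fun y => Real.exp (lam * y)) (Real.exp (lam * x) * lam) x :=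
    (Real.hasDerivAt_exp (lam * x)).comp x h0
  have := h.div_const lam
  simpa [mul_div_assoc, mul_div_cancel_right₀ _ hlam] using this

private lemma integrableOn_exp_mul_Iic' (lam : ℝ) (hlam : 0 < lam) :
    IntegrableOn (fun x => Real.exp (lam * x)) (Set.Iic (0:ℝ)) := by
  have hc : Continuous fun x : ℝ => Real.exp (lam * x) := by continuity
  have key : ∀ y : ℝ, ∫ x in y..0, Real.exp (lam * x)
      = (Real.exp (lam * 0) - Real.exp (lam * y)) / lam := by
    intro y
    rw [intervalIntegral.integral_eq_sub_of_hasDerivAt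
      (fun x _ => hasDerivAt_exp_mul lam x hlam.ne')
      (hc.intervalIntegrable y 0)]
    ring
  refine integrableOn_Iic_of_intervalIntegral_norm_bounded (1/lam) 0
    (fun y => (hc.intervalIntegrable y 0).1) tendsto_id ?_
  filter_upwards with y
  have h1 : ∫ x in y..0, ‖Real.exp (lam * x)‖ = ∫ x in y..0, Real.exp (lam * x) := by
    congr 1; ext x; exact Real.norm_of_nonneg (Real.exp_pos _).le
  rw [h1, key y, mul_zero, Real.exp_zero]
  have := (Real.exp_pos (lam * y)).le
  rw [div_le_div_iff₀ hlam hlam]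
  nlinarith

private lemma integral_exp_mul_Iic' (lam : ℝ) (hlam : 0 < lam) :
    ∫ x in Set.Iic (0:ℝ), Real.exp (lam * x) = 1 / lam := by
  have htend : Tendsto (fun y => Real.exp (lam * y) / lam) atBot (nhds 0) := by
    have h1 : Tendsto (fun y : ℝ => lam * y) atBot atBot :=
      (tendsto_const_mul_atBot_of_pos hlam).mpr tendsto_id
    have := (Real.tendsto_exp_atBot.comp h1).div_const lam
    simpa using this
  have := MeasureTheory.integral_Iic_of_hasDerivAt_of_tendsto'
    (fun x _ => hasDerivAt_exp_mul lam x hlam.ne')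
    (integrableOn_exp_mul_Iic' lam hlam) htend
  simpa using this

private lemma vol_aux (b lam t : ℝ) (hb0 : 0 ≤ b) (hb1 : b ≤ 1) (hlam : 0 < lam) :
    volume {p : ℝ × ℝ | p.2 ≤ 0 ∧ b ≤ p.1 ∧ p.1 < b + (1 - b) * Real.exp (lam * (p.2 - t))}
      = ENNReal.ofReal ((1 - b) / lam * Real.exp (-lam * t)) := by
  set f : ℝ → ℝ := fun s => b + (1 - b) * Real.exp (lam * (s - t)) with hf
  set S : Set (ℝ × ℝ) := {p | p.1 ≤ 0 ∧ p.2 ∈ Set.Ico b (f p.1)} with hS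
  have hfc : Continuous f := by
    apply Continuous.add continuous_const
    exact Continuous.mul continuous_const (by continuity)
  have hSm : MeasurableSet S := by
    have h1 : MeasurableSet {p : ℝ × ℝ | p.1 ≤ 0} :=
      measurableSet_le measurable_fst measurable_const
    have h2 : MeasurableSet {p : ℝ × ℝ | b ≤ p.2} :=
      measurableSet_le measurable_const measurable_snd
    have h3 : MeasurableSet {p : ℝ × ℝ | p.2 < f p.1} :=
      measurableSet_lt measurable_snd (hfc.measurable.comp measurable_fst)
    have : S = {p : ℝ × ℝ | p.1 ≤ 0} ∩ ({p | b ≤ p.2} ∩ {p | p.2 < f p.1}) := by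
      ext p; simp [hS, Set.mem_Ico, and_assoc]
    rw [this]; exact h1.inter (h2.inter h3)
  have hswap : {p : ℝ × ℝ | p.2 ≤ 0 ∧ b ≤ p.1 ∧ p.1 < b + (1 - b) * Real.exp (lam * (p.2 - t))}
      = Prod.swap ⁻¹' S := by
    ext p; simp [hS, Set.mem_Ico, hf, and_assoc]
  rw [hswap, Measure.volume_eq_prod, (Measure.measurePreserving_swap (μ := volume) (ν := volume)).measure_preimage
    hSm.nullMeasurableSet, MeasureTheory.Measure.prod_apply hSm]
  have hsec : ∀ x : ℝ, volume (Prod.mk x ⁻¹' S)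
      = Set.indicator (Set.Iic (0:ℝ))
          (fun x => ENNReal.ofReal ((1 - b) * Real.exp (-lam * t) * Real.exp (lam * x))) x := by
    intro x
    by_cases hx : x ≤ 0
    · have : Prod.mk x ⁻¹' S = Set.Ico b (f x) := by
        ext y; simp [hS, hx]
      rw [this, Real.volume_Ico, Set.indicator_of_mem (Set.mem_Iic.mpr hx)]
      congr 1
      have : Real.exp (lam * (x - t)) = Real.exp (-lam * t) * Real.exp (lam * x) := by
        rw [← Real.exp_add]; ring_nf
      simp [hf, this]; ring
    · have : Prod.mk x ⁻¹' S = ∅ := by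
        ext y; simp [hS, hx]
      rw [this, Set.indicator_of_notMem (fun h => hx (Set.mem_Iic.mp h))]
      simp
  rw [lintegral_congr hsec, lintegral_indicator measurableSet_Iic]
  have hnn : 0 ≤ (1 - b) * Real.exp (-lam * t) := by
    have := (Real.exp_pos (-lam * t)).le; nlinarith
  have hint : IntegrableOn
      (fun x => (1 - b) * Real.exp (-lam * t) * Real.exp (lam * x)) (Set.Iic (0:ℝ)) :=
    (integrableOn_exp_mul_Iic' lam hlam).const_mul _
  rw [← MeasureTheory.ofReal_integral_eq_lintegral_ofReal hint
    (Filter.Eventually.of_forall fun x => by positivity)]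
  rw [MeasureTheory.integral_const_mul, integral_exp_mul_Iic' lam hlam]
  congr 1
  ring

/-- For the exponential trawl function `d(s) = b + (1−b)·e^{λs}` with
`λ > 0` and `b ∈ [0,1]`, the squashed trawl `A` satisfies `leb(A) = (1 − b)/λ` and, for
every `t ≥ 0`, `leb(A_t ∩ A) = ((1 − b)/λ)·e^{−λt}`. -/
theorem exponential_trawl_areas
    (b lam : ℝ) (hb : b ∈ Set.Icc (0:ℝ) 1) (hlam : 0 < lam)
    (d : ℝ → ℝ)
    (hd : ∀ s : ℝ, d s = b + (1 - b) * Real.exp (lam * s))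
    (A : ℝ → Set (ℝ × ℝ))
    (hA : ∀ t, A t = {p : ℝ × ℝ | p.2 ≤ t ∧ b ≤ p.1 ∧ p.1 < d (p.2 - t)}) :
    volume (A 0) = ENNReal.ofReal ((1 - b) / lam) ∧
    ∀ t ≥ (0:ℝ),
      volume (A t ∩ A 0) = ENNReal.ofReal ((1 - b) / lam * Real.exp (-lam * t)) := by
  obtain ⟨hb0, hb1⟩ := hb
  have hA0 : A 0 = {p : ℝ × ℝ | p.2 ≤ 0 ∧ b ≤ p.1 ∧ p.1 < b + (1 - b) * Real.exp (lam * (p.2 - 0))} := by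
    rw [hA 0]; ext p; simp [hd]
  constructor
  · rw [hA0, vol_aux b lam 0 hb0 hb1 hlam]
    simp
  · intro t ht
    have hinter : A t ∩ A 0
        = {p : ℝ × ℝ | p.2 ≤ 0 ∧ b ≤ p.1 ∧ p.1 < b + (1 - b) * Real.exp (lam * (p.2 - t))} := by
      rw [hA t, hA 0]
      ext p
      simp only [Set.mem_inter_iff, Set.mem_setOf_eq, hd, sub_zero]
      constructor
      · rintro ⟨⟨_, hbx, hlt⟩, ⟨h0, _, _⟩⟩
        exact ⟨h0, hbx, hlt⟩
      · rintro ⟨h0, hbx, hlt⟩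
        refine ⟨⟨le_trans h0 ht, hbx, hlt⟩, h0, hbx, lt_of_lt_of_le hlt ?_⟩
        have hexp : Real.exp (lam * (p.2 - t)) ≤ Real.exp (lam * p.2) := by
          apply Real.exp_le_exp.mpr
          nlinarith
        nlinarith
    rw [hinter, vol_aux b lam t hb0 hb1 hlam]
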